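/- Suppose X is a reflexive Banach space and γ ∈ L^∞((0,T); X). Then the forward time-interpolations converge to γ weakly-* in L^∞((0,T); X) as τ → 0⁺, in the following sense: for every φ ∈ L¹((0,T); X*), ∫_0^T ⟨φ(t), [γ̄]_τ(t)⟩_{X*,X} dt → ∫_0^T ⟨φ(t), γ(t)⟩_{X*,X} dt as τ → 0⁺. -/

import Mathlib

open MeasureTheory Set Filter Topology
open scoped ENNReal NNReal

/-- Interval averages `γ_i := (1/τ) ∫_{t_{i-1}}^{t_i} γ(ς) dς` (Bochner integral),
with `t_i = iτ` and `γ` understood as extended by zero outside `(0,T)`. -/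
noncomputable def avgSeq {X : Type*} [NormedAddCommGroup X] [NormedSpace ℝ X]
    (τ : ℝ) (γ : ℝ → X) (i : ℕ) : X :=
  τ⁻¹ • ∫ s in Set.Ioc ((i : ℝ) * τ - τ) ((i : ℝ) * τ), γ s

/-- Forward time-interpolation: value `g i` on `(t_{i-1}, t_i]` for `i ≥ 1`,
and `g 0` on `(-∞, 0]`. -/
noncomputable def fwdInterp {X : Type*} (τ : ℝ) (g : ℕ → X) (t : ℝ) : X :=
  g ⌈t / τ⌉₊

/-- Backward time-interpolation: value `g i` on `(t_i, t_{i+1}]` for `i ≥ 0`,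
and `0` on `(-∞, 0]`. -/
noncomputable def bwdInterp {X : Type*} [Zero X] (τ : ℝ) (g : ℕ → X) (t : ℝ) : X :=
  if t ≤ 0 then 0 else g (⌈t / τ⌉₊ - 1)

/-- Linear time-interpolation:
`((t - t_{i-1})/τ) • g i + ((t_i - t)/τ) • g (i-1)` on `[t_{i-1}, t_i)` for `i ≥ 1`. -/
noncomputable def linInterp {X : Type*} [AddCommGroup X] [Module ℝ X]
    (τ : ℝ) (g : ℕ → X) (t : ℝ) : X :=
  if t < 0 then 0
  else ((t - (⌊t / τ⌋₊ : ℝ) * τ) / τ) • g (⌊t / τ⌋₊ + 1)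
    + (((⌊t / τ⌋₊ : ℝ) * τ + τ - t) / τ) • g ⌊t / τ⌋₊

/-- Nodal values for a function defined on `[0,T]`:
`γ_i = γ(t_i)` if `t_i ≤ T`, `γ_i = γ(t_{i-1})` if `t_{i-1} ≤ T < t_i`, and `0` otherwise. -/
noncomputable def nodalSeq {X : Type*} [Zero X] (τ T : ℝ) (γ : ℝ → X) (i : ℕ) : X :=
  if (i : ℝ) * τ ≤ T then γ ((i : ℝ) * τ)
  else if (i : ℝ) * τ - τ ≤ T then γ ((i : ℝ) * τ - τ)
  else 0


/-- If `X` is a reflexive Banach space and `γ ∈ L^∞((0,T);X)` (extended by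
zero outside `(0,T)`), then the forward time-interpolations converge to `γ` weakly-* in
`L^∞((0,T);X)` as `τ → 0⁺`: for every `φ ∈ L¹((0,T); X*)`,
`∫_0^T ⟨φ(t), [γ̄]_τ(t)⟩ dt → ∫_0^T ⟨φ(t), γ(t)⟩ dt`. -/
theorem forward_interp_weakStar_convergence
    {X : Type*} [NormedAddCommGroup X] [NormedSpace ℝ X] [CompleteSpace X]
    (hrefl : Function.Surjective (NormedSpace.inclusionInDoubleDual ℝ X))
    {T : ℝ} (hT : 0 < T) (γ : ℝ → X)
    (hzero : ∀ t, t ∉ Set.Ioo 0 T → γ t = 0)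
    (hmem : MemLp γ ⊤ (volume.restrict (Set.Ioo 0 T))) :
    ∀ φ : ℝ → StrongDual ℝ X, Integrable φ (volume.restrict (Set.Ioo 0 T)) →
      Tendsto (fun τ : ℝ => ∫ t in Set.Ioo (0:ℝ) T, φ t (fwdInterp τ (avgSeq τ γ) t))
        (𝓝[Set.Ioo (0:ℝ) 1] 0) (𝓝 (∫ t in Set.Ioo (0:ℝ) T, φ t (γ t))) := by
  classical
  -- L^∞ bound
  have hCfin : eLpNormEssSup γ (volume.restrict (Set.Ioo 0 T)) < ⊤ := by
    have h := hmem.2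
    rwa [eLpNorm_exponent_top] at h
  set M : ℝ := (eLpNormEssSup γ (volume.restrict (Set.Ioo 0 T))).toReal with hMdef
  have hM0 : 0 ≤ M := ENNReal.toReal_nonneg
  have hMae : ∀ᵐ s : ℝ, ‖γ s‖ ≤ M := by
    have h1 : ∀ᵐ s ∂(volume.restrict (Set.Ioo (0:ℝ) T)), ‖γ s‖ ≤ M := by
      filter_upwards [enorm_ae_le_eLpNormEssSup γ (volume.restrict (Set.Ioo 0 T))] with s hs
      have := ENNReal.toReal_mono hCfin.ne hs
      simpa using this
    rw [ae_restrict_iff' measurableSet_Ioo] at h1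
    filter_upwards [h1] with s hs
    by_cases h : s ∈ Set.Ioo (0:ℝ) T
    · exact hs h
    · simp [hzero s h, hM0]
  -- γ equals the indicator of Ioo 0 T
  have hind : γ = (Set.Ioo (0:ℝ) T).indicator γ := by
    funext s
    by_cases h : s ∈ Set.Ioo (0:ℝ) T
    · simp [Set.indicator_of_mem h]
    · simp [Set.indicator_of_notMem h, hzero s h]
  haveI : IsFiniteMeasure (volume.restrict (Set.Ioo (0:ℝ) T)) :=
    ⟨by rw [Measure.restrict_apply_univ]; exact measure_Ioo_lt_top⟩
  have hγint : Integrable γ volume := by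
    rw [hind, integrable_indicator_iff measurableSet_Ioo]
    exact hmem.integrable le_top
  intro φ hφ
  -- key norm bound for the averages
  have key : ∀ τ : ℝ, 0 < τ → ∀ i : ℕ, ‖avgSeq τ γ i‖ ≤ M := by
    intro τ hτ0 i
    have hvol : volume (Set.Ioc ((i:ℝ)*τ - τ) ((i:ℝ)*τ)) = ENNReal.ofReal τ := by
      rw [Real.volume_Ioc]; congr 1; ring
    have h1 : ‖∫ s in Set.Ioc ((i:ℝ)*τ - τ) ((i:ℝ)*τ), γ s‖
        ≤ M * (volume (Set.Ioc ((i:ℝ)*τ - τ) ((i:ℝ)*τ))).toReal := by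
      apply norm_setIntegral_le_of_norm_le_const_ae
      · rw [hvol]; exact ENNReal.ofReal_lt_top
      · exact ae_restrict_of_ae hMae
    rw [hvol, ENNReal.toReal_ofReal hτ0.le] at h1
    have : ‖avgSeq τ γ i‖ = τ⁻¹ * ‖∫ s in Set.Ioc ((i:ℝ)*τ - τ) ((i:ℝ)*τ), γ s‖ := by
      rw [avgSeq, norm_smul, Real.norm_eq_abs, abs_of_pos (inv_pos.2 hτ0)]
    rw [this]
    calc τ⁻¹ * ‖∫ s in Set.Ioc ((i:ℝ)*τ - τ) ((i:ℝ)*τ), γ s‖ ≤ τ⁻¹ * (M * τ) :=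
          mul_le_mul_of_nonneg_left h1 (inv_pos.2 hτ0).le
      _ = M := by field_simp
  -- dominated convergence
  apply tendsto_integral_filter_of_dominated_convergence (fun t => ‖φ t‖ * M)
  · -- measurability
    filter_upwards [self_mem_nhdsWithin] with τ hτ
    have hF : StronglyMeasurable (fun t : ℝ => fwdInterp τ (avgSeq τ γ) t) := by
      letI : MeasurableSpace X := borel X
      haveI : BorelSpace X := ⟨rfl⟩
      rw [stronglyMeasurable_iff_measurable_separable]
      constructor
      · exact measurable_from_top.comp (Nat.measurable_ceil.comp (measurable_id.div_const τ))
      · apply ((Set.countable_range (avgSeq τ γ)).isSeparable).mono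
        rintro - ⟨t, rfl⟩
        exact ⟨⌈t / τ⌉₊, rfl⟩
    exact (ContinuousLinearMap.id ℝ (StrongDual ℝ X)).aestronglyMeasurable_comp₂
      hφ.1 hF.aestronglyMeasurable
  · -- domination
    filter_upwards [self_mem_nhdsWithin] with τ hτ
    refine Eventually.of_forall fun t => ?_
    calc ‖φ t (fwdInterp τ (avgSeq τ γ) t)‖ ≤ ‖φ t‖ * ‖fwdInterp τ (avgSeq τ γ) t‖ :=
          (φ t).le_opNorm _
      _ ≤ ‖φ t‖ * M := mul_le_mul_of_nonneg_left (key τ hτ.1 _) (norm_nonneg _)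
  · exact hφ.norm.mul_const M
  · -- pointwise a.e. convergence
    have hloc : LocallyIntegrable γ volume := hγint.locallyIntegrable
    have hleb := IsUnifLocDoublingMeasure.ae_tendsto_average_norm_sub (volume : Measure ℝ) hloc 1
    filter_upwards [ae_restrict_of_ae hleb, ae_restrict_mem measurableSet_Ioo] with t ht htT
    have hFt : Tendsto (fun τ : ℝ => fwdInterp τ (avgSeq τ γ) t)
        (𝓝[Set.Ioo (0:ℝ) 1] 0) (𝓝 (γ t)) := by
      rw [tendsto_iff_norm_sub_tendsto_zero]
      have δlim : Tendsto (fun τ : ℝ => τ/2) (𝓝[Set.Ioo (0:ℝ) 1] 0) (𝓝[>] 0) := by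
        rw [tendsto_nhdsWithin_iff]
        constructor
        · have : Tendsto (fun τ : ℝ => τ/2) (𝓝 0) (𝓝 0) := by
            simpa using (tendsto_id (α := ℝ) (x := 𝓝 0)).div_const 2
          exact this.mono_left nhdsWithin_le_nhds
        · filter_upwards [self_mem_nhdsWithin] with τ hτ
          exact half_pos hτ.1
      have xmem : ∀ᶠ τ in 𝓝[Set.Ioo (0:ℝ) 1] 0,
          t ∈ Metric.closedBall ((⌈t/τ⌉₊ : ℝ)*τ - τ/2) (1 * (τ/2)) := by
        filter_upwards [self_mem_nhdsWithin] with τ hτ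
        have hτ0 : 0 < τ := hτ.1
        have h1 : t/τ ≤ (⌈t/τ⌉₊ : ℝ) := Nat.le_ceil _
        have h2 : (⌈t/τ⌉₊ : ℝ) < t/τ + 1 :=
          Nat.ceil_lt_add_one (div_nonneg htT.1.le hτ0.le)
        have h3 : t ≤ (⌈t/τ⌉₊ : ℝ) * τ := by
          rw [← div_le_iff₀ hτ0] at *; linarith [h1]
        have h4 : (⌈t/τ⌉₊ : ℝ) * τ < t + τ := by
          have := (mul_lt_mul_of_pos_right h2 hτ0)
          rwa [add_mul, one_mul, div_mul_cancel₀ _ hτ0.ne'] at this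
        rw [one_mul, Real.closedBall_eq_Icc]
        constructor <;> [skip; skip] <;> linarith
      have hlim0 := ht (fun τ : ℝ => (⌈t/τ⌉₊ : ℝ)*τ - τ/2) (fun τ : ℝ => τ/2) δlim xmem
      apply squeeze_zero_norm' ?_ hlim0
      filter_upwards [self_mem_nhdsWithin] with τ hτ
      have hτ0 : 0 < τ := hτ.1
      set a : ℝ := (⌈t/τ⌉₊ : ℝ) * τ - τ with ha
      set b : ℝ := (⌈t/τ⌉₊ : ℝ) * τ with hb
      have hball : Metric.closedBall ((⌈t/τ⌉₊ : ℝ)*τ - τ/2) (τ/2) = Set.Icc a b := by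
        rw [Real.closedBall_eq_Icc, show (⌈t/τ⌉₊ : ℝ)*τ - τ/2 - τ/2 = a by ring, show (⌈t/τ⌉₊ : ℝ)*τ - τ/2 + τ/2 = b by ring]
      have hvol : volume (Set.Ioc a b) = ENNReal.ofReal τ := by
        rw [Real.volume_Ioc]; congr 1; ring
      have hint1 : IntegrableOn γ (Set.Ioc a b) volume := hγint.integrableOn
      have hint2 : IntegrableOn (fun _ : ℝ => γ t) (Set.Ioc a b) volume := by
        apply (integrableOn_const_iff (C := γ t)).2
        right; rw [hvol]; exact ENNReal.ofReal_lt_top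
      have hsub : fwdInterp τ (avgSeq τ γ) t - γ t
          = τ⁻¹ • ∫ s in Set.Ioc a b, (γ s - γ t) := by
        rw [integral_sub hint1 hint2, setIntegral_const, measureReal_def, hvol,
          ENNReal.toReal_ofReal hτ0.le, smul_sub, smul_smul,
          inv_mul_cancel₀ hτ0.ne', one_smul]
        rfl
      have hle : ‖fwdInterp τ (avgSeq τ γ) t - γ t‖
          ≤ ⨍ y in Metric.closedBall ((⌈t/τ⌉₊ : ℝ)*τ - τ/2) (τ/2), ‖γ y - γ t‖ := by
        rw [hsub, setAverage_eq, hball, measureReal_def, Real.volume_Icc]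
        have hba : b - a = τ := by ring
        rw [hba, ENNReal.toReal_ofReal hτ0.le, norm_smul, Real.norm_eq_abs,
          abs_of_pos (inv_pos.2 hτ0), smul_eq_mul,
          integral_Icc_eq_integral_Ioc]
        exact mul_le_mul_of_nonneg_left (norm_integral_le_integral_norm _) (inv_pos.2 hτ0).le
      calc ‖‖fwdInterp τ (avgSeq τ γ) t - γ t‖‖ = ‖fwdInterp τ (avgSeq τ γ) t - γ t‖ :=
            norm_norm _
        _ ≤ _ := hle
    exact ((φ t).continuous.tendsto (γ t)).comp hFt
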